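/- If G is an n-vertex graph with cop number k, then the capture time of G satisfies capt(G) ≤ n · C(n+k-1, k). -/

import Mathlib

namespace CR

/-- A (positional) strategy for `k` cops: initial positions, and a move
function depending on the current configuration (cop positions, robber position). -/
structure CopStrat (V : Type) (k : ℕ) where
  init : Fin k → V
  move : (Fin k → V) → V → Fin k → V

/-- A (positional) strategy for the robber: an initial position chosen after seeing
the cops' initial positions, and a move function of the current configuration. -/
structure RobStrat (V : Type) (k : ℕ) where
  init : (Fin k → V) → V
  move : (Fin k → V) → V → V

variable {V : Type} {k : ℕ}

/-- The configuration (cop positions, robber position) at the end of round `t`. -/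
def play (cs : CopStrat V k) (rs : RobStrat V k) : ℕ → (Fin k → V) × V
  | 0 => (cs.init, rs.init cs.init)
  | t + 1 =>
      let c := cs.move (play cs rs t).1 (play cs rs t).2
      (c, rs.move c (play cs rs t).2)

/-- A cop strategy is valid if every cop always moves along the move relation `adj`. -/
def CopStrat.Valid (adj : V → V → Prop) (cs : CopStrat V k) : Prop :=
  ∀ c r i, adj (c i) (cs.move c r i)

/-- A robber strategy is valid if the robber always moves along the move relation `adj`. -/
def RobStrat.Valid (adj : V → V → Prop) (rs : RobStrat V k) : Prop :=
  ∀ c r, adj r (rs.move c r)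

/-- The robber is caught at stage `s`: some cop occupies the robber's vertex
(at stage `s ≥ 1`, checked just after the cops' move in round `s`). -/
def caughtAt (cs : CopStrat V k) (rs : RobStrat V k) : ℕ → Prop
  | 0 => ∃ i, cs.init i = rs.init cs.init
  | t + 1 => ∃ i, cs.move (play cs rs t).1 (play cs rs t).2 i = (play cs rs t).2

/-- `k` cops can guarantee capture within `t` rounds on the graph with move relation `adj`. -/
def CopsWinIn (adj : V → V → Prop) (k t : ℕ) : Prop :=
  ∃ cs : CopStrat V k, cs.Valid adj ∧
    ∀ rs : RobStrat V k, rs.Valid adj → ∃ s, s ≤ t ∧ caughtAt cs rs s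

/-- The cop number: least `k` such that `k` cops can guarantee capture. -/
noncomputable def copNumber (adj : V → V → Prop) : ℕ :=
  sInf {k | ∃ t, CopsWinIn adj k t}

/-- The capture time: least `t` such that `copNumber` cops capture within `t` rounds. -/
noncomputable def captTime (adj : V → V → Prop) : ℕ :=
  sInf {t | CopsWinIn adj (copNumber adj) t}

end CR

open CR

namespace CRAux

variable {V : Type} {k : ℕ}

lemma exists_comp_perm {V : Type} [Fintype V] {k : ℕ} {f g : Fin k → V}
    (h : (↑(List.ofFn f) : Multiset V) = ↑(List.ofFn g)) :
    ∃ σ : Equiv.Perm (Fin k), f ∘ σ = g := by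
  letI : LinearOrder V := LinearOrder.lift' (Fintype.equivFin V) (Equiv.injective _)
  have hp : List.Perm (List.ofFn f) (List.ofFn g) := Multiset.coe_eq_coe.mp h
  have h2 : List.Perm (List.ofFn (f ∘ Tuple.sort f)) (List.ofFn (g ∘ Tuple.sort g)) :=
    (((Tuple.sort f).ofFn_comp_perm f).trans hp).trans
      ((Tuple.sort g).ofFn_comp_perm g).symm
  have h3 : f ∘ Tuple.sort f = g ∘ Tuple.sort g :=
    List.ofFn_injective (h2.eq_of_sortedLE
      ((Tuple.monotone_sort f).sortedLE_ofFn) ((Tuple.monotone_sort g).sortedLE_ofFn))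
  refine ⟨((Tuple.sort g).symm).trans (Tuple.sort f), funext fun x => ?_⟩
  have := congrFun h3 ((Tuple.sort g).symm x)
  simpa using this

/-- One step of the cops-win predicate. -/
def F (adj : V → V → Prop) {k : ℕ} (S : (Fin k → V) × V → Prop) :
    (Fin k → V) × V → Prop :=
  fun p => ∃ c' : Fin k → V, (∀ i, adj (p.1 i) (c' i)) ∧
    ((∃ i, c' i = p.2) ∨ ∀ r', adj p.2 r' → S (c', r'))

/-- Configurations (cops-to-move) from which the cops can "win within t". -/
def W (adj : V → V → Prop) (k : ℕ) : ℕ → (Fin k → V) × V → Prop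
  | 0 => fun p => ∃ i, p.1 i = p.2
  | t + 1 => F adj (W adj k t)

variable {adj : V → V → Prop}

lemma W_mono (href : ∀ v, adj v v) : ∀ (t : ℕ) (p), W adj k t p → W adj k (t+1) p := by
  intro t
  induction t with
  | zero => exact fun p hp => ⟨p.1, fun i => href _, Or.inl hp⟩
  | succ t ih =>
      rintro p ⟨c', hc', h⟩
      exact ⟨c', hc', h.imp id (fun h r' hr' => ih _ (h r' hr'))⟩

lemma W_le (href : ∀ v, adj v v) {s t : ℕ} (h : s ≤ t) {p} (hp : W adj k s p) :
    W adj k t p := by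
  induction t with
  | zero => exact (Nat.le_zero.mp h) ▸ hp
  | succ t ih =>
      rcases Nat.lt_or_ge s (t+1) with h' | h'
      · exact W_mono href t p (ih (Nat.lt_succ_iff.mp h'))
      · exact (Nat.le_antisymm h h') ▸ hp

lemma W_perm : ∀ (t : ℕ) (σ : Equiv.Perm (Fin k)) (c : Fin k → V) (r : V),
    W adj k t (c, r) → W adj k t (c ∘ σ, r) := by
  intro t
  induction t with
  | zero =>
      rintro σ c r ⟨i, hi⟩
      exact ⟨σ.symm i, by simpa using hi⟩
  | succ t ih =>
      rintro σ c r ⟨c', hc', h⟩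
      refine ⟨c' ∘ σ, fun i => hc' (σ i), h.imp ?_ (fun h r' hr' => ih σ c' r' (h r' hr'))⟩
      rintro ⟨i, hi⟩
      exact ⟨σ.symm i, by simp [hi]⟩

lemma W_stab {T : ℕ} (h : W adj k (T+1) = W adj k T) :
    ∀ u, T ≤ u → W adj k u = W adj k T := by
  intro u hu
  induction u with
  | zero => exact (Nat.le_zero.mp hu) ▸ rfl
  | succ u ih =>
      rcases Nat.lt_or_ge T (u+1) with h' | h'
      · have hu' : T ≤ u := Nat.lt_succ_iff.mp h'
        calc W adj k (u+1) = F adj (W adj k u) := rfl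
          _ = F adj (W adj k T) := by rw [ih hu']
          _ = W adj k (T+1) := rfl
          _ = W adj k T := h
      · exact (Nat.le_antisymm hu h') ▸ rfl

/-- Stabilization within the number of (multiset) configurations. -/
lemma exists_stab [Fintype V] [Nonempty V] (adj : V → V → Prop) (href : ∀ v, adj v v)
    (hk : 0 < k) :
    ∃ T, T < Fintype.card V * (Fintype.card V + k - 1).choose k ∧
      W adj k (T+1) = W adj k T := by
  classical
  by_contra hcon
  push_neg at hcon
  set B := Fintype.card V * (Fintype.card V + k - 1).choose k with hB
  let mk : (Fin k → V) → Sym V k := fun c => ⟨(↑(List.ofFn c) : Multiset V), by simp⟩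
  let S : ℕ → Finset (Sym V k × V) := fun t =>
    Finset.univ.filter (fun q => ∃ c r, W adj k t (c, r) ∧ mk c = q.1 ∧ r = q.2)
  have hmk : ∀ c c' : Fin k → V, mk c = mk c' → ∃ σ : Equiv.Perm (Fin k), c ∘ σ = c' := by
    intro c c' h
    exact exists_comp_perm (congrArg Subtype.val h)
  have hsub : ∀ t, S t ⊆ S (t+1) := by
    intro t q hq
    simp only [S, Finset.mem_filter] at hq ⊢
    obtain ⟨h1, c, r, hw, h2, h3⟩ := hq
    exact ⟨h1, c, r, W_mono href t _ hw, h2, h3⟩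
  have hstrict : ∀ t, t < B → S t ⊂ S (t+1) := by
    intro t ht
    have hne := hcon t ht
    have hex : ∃ p, W adj k (t+1) p ∧ ¬ W adj k t p := by
      by_contra h
      push_neg at h
      exact hne (funext fun p => propext ⟨h p, W_mono href t p⟩)
    obtain ⟨p, hp1, hp2⟩ := hex
    refine ⟨hsub t, fun hsub' => ?_⟩
    have hmem : (mk p.1, p.2) ∈ S (t+1) := by
      simp only [S, Finset.mem_filter]
      exact ⟨Finset.mem_univ _, p.1, p.2, hp1, rfl, rfl⟩
    have := hsub' hmem
    simp only [S, Finset.mem_filter] at this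
    obtain ⟨-, c, r, hw, h2, h3⟩ := this
    subst h3
    obtain ⟨σ, hσ⟩ := hmk c p.1 h2
    have hW := W_perm t σ c p.2 hw
    rw [hσ] at hW
    exact hp2 hW
  have hcard : ∀ t, t ≤ B → t + 1 ≤ (S t).card := by
    intro t
    induction t with
    | zero =>
        intro _
        have hw0 : W adj k 0 (fun _ : Fin k => Classical.arbitrary V, Classical.arbitrary V) :=
          ⟨⟨0, hk⟩, rfl⟩
        have hmem : (mk (fun _ => Classical.arbitrary V), Classical.arbitrary V) ∈ S 0 := by
          simp only [S, Finset.mem_filter]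
          exact ⟨Finset.mem_univ _, _, _, hw0, rfl, rfl⟩
        exact Finset.card_pos.mpr ⟨_, hmem⟩
    | succ t ih =>
        intro ht
        have h1 := ih (Nat.le_of_succ_le ht)
        have h2 := Finset.card_lt_card (hstrict t ht)
        omega
  have hfull : B + 1 ≤ (S B).card := hcard B le_rfl
  have hle : (S B).card ≤ Fintype.card (Sym V k × V) := Finset.card_le_univ _
  rw [Fintype.card_prod, Sym.card_sym_eq_choose, Nat.mul_comm] at hle
  omega

end CRAux

namespace CRAux

variable {V : Type} {k : ℕ} {adj : V → V → Prop}

open Classical in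
/-- The rank-decreasing cop strategy built from `W`. -/
noncomputable def copStrat (adj : V → V → Prop) (k : ℕ) (c0 : Fin k → V) :
    CopStrat V k where
  init := c0
  move := fun c r =>
    if h1 : ∃ c' : Fin k → V, (∀ i, adj (c i) (c' i)) ∧ ∃ i, c' i = r then h1.choose
    else if h2 : ∃ c' : Fin k → V, (∀ i, adj (c i) (c' i)) ∧
        ∀ r', adj r r' → W adj k (sInf {m | W adj k m (c, r)} - 1) (c', r') then
      h2.choose
    else c

lemma copStrat_valid (href : ∀ v, adj v v) (c0 : Fin k → V) :
    (copStrat adj k c0).Valid adj := by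
  intro c r i
  simp only [copStrat]
  split_ifs with h1 h2
  · exact h1.choose_spec.1 i
  · exact h2.choose_spec.1 i
  · exact href _

lemma copStrat_catch (href : ∀ v, adj v v) (c0 : Fin k → V)
    (rs : RobStrat V k) (hrs : rs.Valid adj) :
    ∀ (m s : ℕ), W adj k m (play (copStrat adj k c0) rs s) →
      ∃ s', s' ≤ s + m + 1 ∧ caughtAt (copStrat adj k c0) rs s' := by
  set cs := copStrat adj k c0 with hcs
  intro m
  induction m using Nat.strong_induction_on with
  | _ m ih =>
    intro s hW
    set p := play cs rs s with hp
    by_cases h1 : ∃ c' : Fin k → V, (∀ i, adj (p.1 i) (c' i)) ∧ ∃ i, c' i = p.2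
    · refine ⟨s + 1, by omega, ?_⟩
      have hmove : cs.move p.1 p.2 = h1.choose := by
        simp only [hcs, copStrat]
        rw [dif_pos h1]
      show ∃ i, cs.move (play cs rs s).1 (play cs rs s).2 i = (play cs rs s).2
      rw [← hp, hmove]
      exact h1.choose_spec.2
    · set R := sInf {m' | W adj k m' (p.1, p.2)} with hR
      have hmemR : R ∈ {m' | W adj k m' (p.1, p.2)} := Nat.sInf_mem ⟨m, hW⟩
      rw [Set.mem_setOf_eq] at hmemR
      have hRle : R ≤ m := Nat.sInf_le hW
      have hR0 : R ≠ 0 := by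
        intro h0
        rw [h0] at hmemR
        obtain ⟨i, hi⟩ := hmemR
        exact h1 ⟨p.1, fun i => href _, i, hi⟩
      obtain ⟨m'', hm''⟩ := Nat.exists_eq_succ_of_ne_zero hR0
      rw [hm''] at hmemR
      obtain ⟨c'', hval, hcase⟩ := hmemR
      rcases hcase with hcaught | hall
      · exact absurd ⟨c'', hval, hcaught⟩ h1
      · have h2 : ∃ c' : Fin k → V, (∀ i, adj (p.1 i) (c' i)) ∧
            ∀ r', adj p.2 r' → W adj k (sInf {m' | W adj k m' (p.1, p.2)} - 1) (c', r') := by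
          refine ⟨c'', hval, ?_⟩
          rw [← hR, hm'']
          simpa using hall
        have hmove : cs.move p.1 p.2 = h2.choose := by
          simp only [hcs, copStrat]
          rw [dif_neg h1, dif_pos h2]
        have hplay : play cs rs (s+1) = (cs.move p.1 p.2, rs.move (cs.move p.1 p.2) p.2) := rfl
        have hnext : W adj k m'' (play cs rs (s+1)) := by
          rw [hplay, hmove]
          have hidx : sInf {m' | W adj k m' (p.1, p.2)} - 1 = m'' := by
            rw [← hR, hm'']; omega
          have hW' := h2.choose_spec.2 (rs.move h2.choose p.2) (hrs h2.choose p.2)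
          exact hidx ▸ hW'
        obtain ⟨s', hs', hc⟩ := ih m'' (by omega) (s+1) hnext
        exact ⟨s', by omega, hc⟩

lemma copsWinIn (href : ∀ v, adj v v) {T : ℕ} (c0 : Fin k → V)
    (hinit : ∀ r0, W adj k T (c0, r0)) : CopsWinIn adj k (T + 1) := by
  refine ⟨copStrat adj k c0, copStrat_valid href c0, fun rs hrs => ?_⟩
  have h0 : W adj k T (play (copStrat adj k c0) rs 0) := hinit _
  obtain ⟨s', hs', hc⟩ := copStrat_catch href c0 rs hrs T 0 h0
  exact ⟨s', by omega, hc⟩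

lemma init_mem_W (href : ∀ v, adj v v) {T : ℕ}
    (hstab : W adj k (T+1) = W adj k T) (cs : CopStrat V k) (hcs : cs.Valid adj)
    {t : ℕ} (hwin : ∀ rs : RobStrat V k, rs.Valid adj → ∃ s, s ≤ t ∧ caughtAt cs rs s) :
    ∀ r0, W adj k T (cs.init, r0) := by
  classical
  by_contra hcon
  push_neg at hcon
  obtain ⟨r0, hr0⟩ := hcon
  have key : ∀ c r, ¬ W adj k T (c, r) → ∀ c' : Fin k → V, (∀ i, adj (c i) (c' i)) →
      (¬ ∃ i, c' i = r) ∧ ∃ r', adj r r' ∧ ¬ W adj k T (c', r') := by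
    intro c r hcr c' hc'
    have hF : ¬ F adj (W adj k T) (c, r) := by
      have hFe : F adj (W adj k T) = W adj k T := hstab
      rw [hFe]; exact hcr
    constructor
    · intro hcatch; exact hF ⟨c', hc', Or.inl hcatch⟩
    · by_contra hno
      push_neg at hno
      exact hF ⟨c', hc', Or.inr fun r' hr' => hno r' hr'⟩
  set rs : RobStrat V k :=
    { init := fun c => if h : ∃ r, ¬ W adj k T (c, r) then h.choose else r0,
      move := fun c r => if h : ∃ r', adj r r' ∧ ¬ W adj k T (c, r') then h.choose else r }
    with hrs
  have hrsvalid : rs.Valid adj := by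
    intro c r
    simp only [hrs]
    split_ifs with h
    · exact h.choose_spec.1
    · exact href r
  have hinv : ∀ s, ¬ W adj k T (play cs rs s) := by
    intro s
    induction s with
    | zero =>
        have hex : ∃ r, ¬ W adj k T (cs.init, r) := ⟨r0, hr0⟩
        show ¬ W adj k T (cs.init, rs.init cs.init)
        have : rs.init cs.init = hex.choose := by
          simp only [hrs]; rw [dif_pos hex]
        rw [this]
        exact hex.choose_spec
    | succ s ihs =>
        have hval : ∀ i, adj ((play cs rs s).1 i) (cs.move (play cs rs s).1 (play cs rs s).2 i) :=
          fun i => hcs _ _ i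
        obtain ⟨-, hex'⟩ := key _ _ ihs _ hval
        show ¬ W adj k T (cs.move (play cs rs s).1 (play cs rs s).2,
          rs.move (cs.move (play cs rs s).1 (play cs rs s).2) (play cs rs s).2)
        have : rs.move (cs.move (play cs rs s).1 (play cs rs s).2) (play cs rs s).2
            = hex'.choose := by
          simp only [hrs]; rw [dif_pos hex']
        rw [this]
        exact hex'.choose_spec.2
  have hnc : ∀ s, ¬ caughtAt cs rs s := by
    intro s
    cases s with
    | zero =>
        rintro ⟨i, hi⟩
        exact hinv 0 (W_le href (Nat.zero_le T) ⟨i, hi⟩)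
    | succ s =>
        rintro ⟨i, hi⟩
        exact (key _ _ (hinv s) _ (fun j => hcs _ _ j)).1 ⟨i, hi⟩
  obtain ⟨s, -, hc⟩ := hwin rs hrsvalid
  exact hnc s hc

lemma no_win_zero [Nonempty V] (href : ∀ v, adj v v) (t : ℕ) : ¬ CopsWinIn adj 0 t := by
  rintro ⟨cs, -, hwin⟩
  obtain ⟨s, -, hc⟩ := hwin ⟨fun _ => Classical.arbitrary V, fun _ r => r⟩ (fun c r => href r)
  cases s with
  | zero => exact absurd hc (by rintro ⟨i, -⟩; exact i.elim0)
  | succ s => exact absurd hc (by rintro ⟨i, -⟩; exact i.elim0)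

lemma main [Fintype V] [Nonempty V] (adj : V → V → Prop) (href : ∀ v, adj v v)
    (k : ℕ) (hk : copNumber adj = k) :
    captTime adj ≤ Fintype.card V * (Fintype.card V + k - 1).choose k := by
  set B := Fintype.card V * (Fintype.card V + k - 1).choose k with hB
  by_cases hset : ∃ t, CopsWinIn adj k t
  · obtain ⟨t, cs, hcsv, hwin⟩ := hset
    have hk0 : 0 < k := by
      rcases Nat.eq_zero_or_pos k with h0 | h
      · exact absurd (h0 ▸ (⟨cs, hcsv, hwin⟩ : CopsWinIn adj k t)) (h0 ▸ no_win_zero href t)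
      · exact h
    obtain ⟨T, hTB, hstab⟩ := exists_stab adj href hk0
    have hinit := init_mem_W href hstab cs hcsv hwin
    have hwinB : CopsWinIn adj k B := by
      obtain ⟨cs', hv', hw'⟩ := copsWinIn href cs.init hinit
      exact ⟨cs', hv', fun rs hrs => by
        obtain ⟨s, hs, hc⟩ := hw' rs hrs
        exact ⟨s, by omega, hc⟩⟩
    have : captTime adj = sInf {t | CopsWinIn adj k t} := by
      simp only [captTime, hk]
    rw [this]
    exact Nat.sInf_le hwinB
  · have hempty : {t | CopsWinIn adj k t} = ∅ :=
      Set.eq_empty_iff_forall_notMem.mpr fun t ht => hset ⟨t, ht⟩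
    have : captTime adj = sInf {t | CopsWinIn adj k t} := by
      simp only [captTime, hk]
    rw [this, hempty, Nat.sInf_empty]
    exact Nat.zero_le _

end CRAux


/-- If `G` is an `n`-vertex (reflexive) graph with cop number `k`, then the capture time of
`G` is at most `n · C(n+k-1, k)`, the number of configurations. -/
theorem captTime_le_card_configurations {V : Type} [Fintype V] [Nonempty V]
    (G : SimpleGraph V) (k : ℕ)
    (hk : copNumber (fun u v : V => u = v ∨ G.Adj u v) = k) :
    captTime (fun u v : V => u = v ∨ G.Adj u v) ≤
      Fintype.card V * (Fintype.card V + k - 1).choose k :=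
  CRAux.main (fun u v : V => u = v ∨ G.Adj u v) (fun v => Or.inl rfl) k hk
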